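/- Chen's identity at the first two levels for concatenation of smooth paths: if X is a smooth path on [a, b] and Y is a smooth path on [b, c] with X(b) = Y(b), and Z denotes the concatenated path on [a, c], then for all i, j ∈ {1,…,d}: S(Z)^i = S(X)^i + S(Y)^i and S(Z)^{i,j} = S(X)^{i,j} + S(X)^i · S(Y)^j + S(Y)^{i,j}. -/

import Mathlib

open MeasureTheory Set

/-- Level-1 signature term of a path over `[a, b]`. -/
noncomputable def sig1 {d : ℕ} (Z : ℝ → Fin d → ℝ) (a b : ℝ) (i : Fin d) : ℝ :=
  ∫ t in a..b, deriv (fun s => Z s i) t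

/-- Level-2 signature term of a path over `[a, b]`. -/
noncomputable def sig2 {d : ℕ} (Z : ℝ → Fin d → ℝ) (a b : ℝ) (i j : Fin d) : ℝ :=
  ∫ p in {p : ℝ × ℝ | a < p.1 ∧ p.1 < p.2 ∧ p.2 < b},
    deriv (fun s => Z s i) p.1 * deriv (fun s => Z s j) p.2

theorem chen_identity_levels_one_two {d : ℕ} (X Y : ℝ → Fin d → ℝ) (a b c : ℝ)
    (hab : a ≤ b) (hbc : b ≤ c) (hX : ContDiff ℝ 1 X) (hY : ContDiff ℝ 1 Y)
    (hmatch : X b = Y b) (Z : ℝ → Fin d → ℝ)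
    (hZ : Z = fun t => if t ≤ b then X t else Y t) :
    (∀ i : Fin d, sig1 Z a c i = sig1 X a b i + sig1 Y b c i) ∧
    (∀ i j : Fin d, sig2 Z a c i j =
      sig2 X a b i j + sig1 X a b i * sig1 Y b c j + sig2 Y b c i j) := by
  have hDXc : ∀ i : Fin d, Continuous (deriv fun s => X s i) := fun i =>
    (contDiff_pi.mp hX i).continuous_deriv le_rfl
  have hDYc : ∀ i : Fin d, Continuous (deriv fun s => Y s i) := fun i =>
    (contDiff_pi.mp hY i).continuous_deriv le_rfl
  set DX := fun (i : Fin d) => deriv (fun s => X s i) with hDX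
  set DY := fun (i : Fin d) => deriv (fun s => Y s i) with hDY
  set W : Fin d → ℝ → ℝ := fun i t => if t ≤ b then DX i t else DY i t with hW
  have hZlt : ∀ (i : Fin d) (t : ℝ), t < b → deriv (fun s => Z s i) t = DX i t := by
    intro i t ht
    apply Filter.EventuallyEq.deriv_eq
    filter_upwards [Iio_mem_nhds ht] with s hs
    simp [hZ, le_of_lt (mem_Iio.mp hs)]
  have hZgt : ∀ (i : Fin d) (t : ℝ), b < t → deriv (fun s => Z s i) t = DY i t := by
    intro i t ht
    apply Filter.EventuallyEq.deriv_eq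
    filter_upwards [Ioi_mem_nhds ht] with s hs
    simp [hZ, not_le.mpr (mem_Ioi.mp hs)]
  have hZne : ∀ (i : Fin d) (t : ℝ), t ≠ b → deriv (fun s => Z s i) t = W i t := by
    intro i t ht
    rcases lt_or_gt_of_ne ht with h | h
    · rw [hZlt i t h, hW]; simp [le_of_lt h]
    · rw [hZgt i t h, hW]; simp [not_le.mpr h]
  -- a.e. facts
  have hne1 : ∀ᵐ t : ℝ, t ≠ b := by
    rw [ae_iff]
    simpa using measure_singleton (μ := (volume : Measure ℝ)) b

  have hWint : ∀ i : Fin d, IntegrableOn (W i) (Icc a c) volume := by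
    intro i
    rw [← Icc_union_Icc_eq_Icc hab hbc]
    apply IntegrableOn.union
    · exact ((hDXc i).integrableOn_Icc).congr_fun
        (fun t ht => by rw [hW]; simp [ht.2, hDX]) measurableSet_Icc
    · apply ((hDYc i).integrableOn_Icc).congr
      filter_upwards [ae_restrict_mem measurableSet_Icc,
        ae_restrict_of_ae (μ := volume) hne1] with t ht htne
      rw [hW]
      simp [not_le.mpr (lt_of_le_of_ne ht.1 (Ne.symm htne)), hDY]
  have hWZ : ∀ (s : Set ℝ) (i : Fin d),
      (W i) =ᵐ[volume.restrict s] fun t => deriv (fun u => Z u i) t := by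
    intro s i
    filter_upwards [ae_restrict_of_ae (μ := volume) hne1] with t ht
    exact (hZne i t ht).symm
  have hZab : ∀ i : Fin d, IntervalIntegrable (deriv fun s => Z s i) volume a b := by
    intro i
    rw [intervalIntegrable_iff_integrableOn_Ioc_of_le hab]
    exact ((hWint i).mono_set (Ioc_subset_Icc_self.trans (Icc_subset_Icc le_rfl hbc))).congr
      (hWZ _ i)
  have hZbc : ∀ i : Fin d, IntervalIntegrable (deriv fun s => Z s i) volume b c := by
    intro i
    rw [intervalIntegrable_iff_integrableOn_Ioc_of_le hbc]
    exact ((hWint i).mono_set (Ioc_subset_Icc_self.trans (Icc_subset_Icc hab le_rfl))).congr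
      (hWZ _ i)
  have hpart1 : ∀ i : Fin d, sig1 Z a c i = sig1 X a b i + sig1 Y b c i := by
    intro i
    rw [sig1, sig1, sig1, ← intervalIntegral.integral_add_adjacent_intervals (hZab i) (hZbc i)]
    congr 1
    · apply intervalIntegral.integral_congr_ae
      filter_upwards [hne1] with t htne ht
      rw [uIoc_of_le hab] at ht
      exact hZlt i t (lt_of_le_of_ne ht.2 htne)
    · apply intervalIntegral.integral_congr_ae
      filter_upwards with t ht
      rw [uIoc_of_le hbc] at ht
      exact hZgt i t ht.1
  refine ⟨hpart1, ?_⟩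
  intro i j
  set S := fun (u v : ℝ) => {p : ℝ × ℝ | u < p.1 ∧ p.1 < p.2 ∧ p.2 < v} with hS
  have hSm : ∀ u v : ℝ, MeasurableSet (S u v) := fun u v =>
    (measurableSet_lt measurable_const measurable_fst).inter
      ((measurableSet_lt measurable_fst measurable_snd).inter
        (measurableSet_lt measurable_snd measurable_const))
  have hGint : IntegrableOn (fun p : ℝ × ℝ => W i p.1 * W j p.2) (Icc a c ×ˢ Icc a c) volume := by
    rw [IntegrableOn, Measure.volume_eq_prod, ← Measure.prod_restrict]
    exact (hWint i).mul_prod (hWint j)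
  have hbox : S a c ⊆ Icc a c ×ˢ Icc a c := fun p hp =>
    ⟨⟨hp.1.le, (hp.2.1.trans hp.2.2).le⟩, ⟨(hp.1.trans hp.2.1).le, hp.2.2.le⟩⟩
  have hsub1 : S a b ⊆ S a c := fun p hp => ⟨hp.1, hp.2.1, hp.2.2.trans_le hbc⟩
  have hsub2 : (Ioo a b ×ˢ Ioo b c) ⊆ S a c := fun p hp =>
    ⟨hp.1.1, hp.1.2.trans hp.2.1, hp.2.2⟩
  have hsub3 : S b c ⊆ S a c := fun p hp => ⟨hab.trans_lt hp.1, hp.2⟩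
  have hI1 : IntegrableOn (fun p : ℝ × ℝ => W i p.1 * W j p.2) (S a b) volume :=
    hGint.mono_set (hsub1.trans hbox)
  have hI2 : IntegrableOn (fun p : ℝ × ℝ => W i p.1 * W j p.2) (Ioo a b ×ˢ Ioo b c) volume :=
    hGint.mono_set (hsub2.trans hbox)
  have hI3 : IntegrableOn (fun p : ℝ × ℝ => W i p.1 * W j p.2) (S b c) volume :=
    hGint.mono_set (hsub3.trans hbox)
  -- null lines
  have hb1 : volume {p : ℝ × ℝ | p.1 = b} = 0 := by
    have : {p : ℝ × ℝ | p.1 = b} = ({b} : Set ℝ) ×ˢ (univ : Set ℝ) := by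
      ext p; simp [Set.mem_prod, Prod.ext_iff, eq_comm]
    rw [this, Measure.volume_eq_prod, Measure.prod_prod]
    simp
  have hb2 : volume {p : ℝ × ℝ | p.2 = b} = 0 := by
    have : {p : ℝ × ℝ | p.2 = b} = (univ : Set ℝ) ×ˢ ({b} : Set ℝ) := by
      ext p; simp [Set.mem_prod, Prod.ext_iff, eq_comm]
    rw [this, Measure.volume_eq_prod, Measure.prod_prod]
    simp
  have hae1 : ∀ᵐ p : ℝ × ℝ, p.1 ≠ b := by
    rw [ae_iff]
    simpa using hb1
  have hae2 : ∀ᵐ p : ℝ × ℝ, p.2 ≠ b := by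
    rw [ae_iff]
    simpa using hb2
  -- step 1: replace derivatives of Z by W
  have hstep : ∫ p in S a c, deriv (fun s => Z s i) p.1 * deriv (fun s => Z s j) p.2 =
      ∫ p in S a c, W i p.1 * W j p.2 := by
    apply integral_congr_ae
    apply ae_restrict_of_ae
    filter_upwards [hae1, hae2] with p hp1 hp2
    rw [hZne i _ hp1, hZne j _ hp2]
  -- step 2: decompose the domain
  have hUsub : S a b ∪ Ioo a b ×ˢ Ioo b c ∪ S b c ⊆ S a c :=
    union_subset (union_subset hsub1 hsub2) hsub3
  have hUeq : S a c =ᵐ[volume] ((S a b ∪ Ioo a b ×ˢ Ioo b c ∪ S b c : Set (ℝ × ℝ))) := by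
    rw [ae_eq_set]
    have hbU : volume ({p : ℝ × ℝ | p.1 = b} ∪ {p : ℝ × ℝ | p.2 = b}) = 0 :=
      measure_union_null hb1 hb2
    refine ⟨measure_mono_null ?_ hbU, ?_⟩
    · rintro p ⟨⟨h1, h2, h3⟩, hp⟩
      simp only [Set.mem_union, Set.mem_setOf_eq]
      rcases lt_trichotomy p.2 b with h | h | h
      · exact absurd (Set.mem_union_left _ (Set.mem_union_left _
          (show p ∈ S a b from ⟨h1, h2, h⟩))) hp
      · exact Or.inr h
      · rcases lt_trichotomy p.1 b with h' | h' | h'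
        · exact absurd (Set.mem_union_left _ (Set.mem_union_right _
            (show p ∈ Ioo a b ×ˢ Ioo b c from ⟨⟨h1, h'⟩, h, h3⟩))) hp
        · exact Or.inl h'
        · exact absurd (Set.mem_union_right _ (show p ∈ S b c from ⟨h', h2, h3⟩)) hp
    · rw [diff_eq_empty.mpr hUsub]
      simp
  have hdisj1 : Disjoint (S a b) (Ioo a b ×ˢ Ioo b c) := by
    rw [Set.disjoint_left]
    rintro p ⟨_, _, h2⟩ ⟨_, h3, _⟩
    exact lt_asymm h2 h3
  have hdisj2 : Disjoint (S a b ∪ Ioo a b ×ˢ Ioo b c) (S b c) := by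
    rw [Set.disjoint_left]
    rintro p hp ⟨hq, _⟩
    rcases hp with ⟨_, h1, h2⟩ | ⟨⟨_, h1⟩, _⟩
    · exact lt_asymm (h1.trans h2) hq
    · exact lt_asymm h1 hq
  -- evaluations
  have e1 : ∫ p in S a b, W i p.1 * W j p.2 = sig2 X a b i j := by
    rw [sig2]
    apply setIntegral_congr_fun (hSm a b)
    rintro p ⟨_, h2, h3⟩
    rw [hW]
    simp [(h2.trans h3).le, h3.le, hDX]
  have e2 : ∫ p in Ioo a b ×ˢ Ioo b c, W i p.1 * W j p.2 = sig1 X a b i * sig1 Y b c j := by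
    rw [setIntegral_congr_fun (measurableSet_Ioo.prod measurableSet_Ioo)
      (g := fun p : ℝ × ℝ => DX i p.1 * DY j p.2) ?_]
    · rw [Measure.volume_eq_prod, setIntegral_prod_mul, sig1, sig1,
        intervalIntegral.integral_of_le hab, intervalIntegral.integral_of_le hbc,
        integral_Ioc_eq_integral_Ioo, integral_Ioc_eq_integral_Ioo]
    · rintro p ⟨⟨_, h1⟩, ⟨h2, _⟩⟩
      rw [hW]
      simp [h1.le, not_le.mpr h2]
  have e3 : ∫ p in S b c, W i p.1 * W j p.2 = sig2 Y b c i j := by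
    rw [sig2]
    apply setIntegral_congr_fun (hSm b c)
    rintro p ⟨h1, h2, _⟩
    rw [hW]
    simp [not_le.mpr h1, not_le.mpr (h1.trans h2), hDY]
  calc sig2 Z a c i j
      = ∫ p in S a c, deriv (fun s => Z s i) p.1 * deriv (fun s => Z s j) p.2 := rfl
    _ = ∫ p in S a c, W i p.1 * W j p.2 := hstep
    _ = ∫ p in S a b ∪ Ioo a b ×ˢ Ioo b c ∪ S b c, W i p.1 * W j p.2 :=
        setIntegral_congr_set hUeq
    _ = (∫ p in S a b ∪ Ioo a b ×ˢ Ioo b c, W i p.1 * W j p.2) +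
        ∫ p in S b c, W i p.1 * W j p.2 :=
        setIntegral_union hdisj2 (hSm b c) (hI1.union hI2) hI3
    _ = (∫ p in S a b, W i p.1 * W j p.2) + (∫ p in Ioo a b ×ˢ Ioo b c, W i p.1 * W j p.2) +
        ∫ p in S b c, W i p.1 * W j p.2 := by
        rw [setIntegral_union hdisj1 (measurableSet_Ioo.prod measurableSet_Ioo) hI1 hI2]
    _ = sig2 X a b i j + sig1 X a b i * sig1 Y b c j + sig2 Y b c i j := by
        rw [e1, e2, e3]
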